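/- Injectivity of the set-unfolding: let S = (Δ, L, E) be a saturated R-graph for an ALCM knowledge base (T, A, M) (in particular, without circularities, with syntactic functionality of M, and with the meta-difference witness condition). Then the function set : Δ → V defined by set(x) = x for x ∉ dom(M) and set(x) = {set(y) | A ∈ L(y)} for x =ₘ A ∈ M is injective. -/
import Mathlib


/-- Injectivity of the set-unfolding of a saturated R-graph for an ALCM knowledge
base.  Δ is the set of nodes (ZF-sets), `m` is the (syntactically functional)
MBox assigning to each individual with meta-modelling its atomic concept,
`L x` is the set of atomic concepts in the label of x, and the relation
`y ≺ x ↔ x =ₘ A ∈ M ∧ A ∈ L y` is well-founded (no circularities).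
`f` is the function `set`: the identity on individuals without meta-modelling,
and f x = {f y | A ∈ L y} when m x = some A; values of `f` at individuals
without meta-modelling are not sets produced by the construction.  By the
meta-difference witness condition, distinct individuals with meta-modelling
have distinct concept extensions.  Then `f` is injective on Δ. -/
theorem set_unfolding_injective {AC : Type}
    (Δ : Set ZFSet) (hfin : Δ.Finite)
    (m : ZFSet → Option AC) (L : ZFSet → Set AC)
    (hwf : WellFounded (fun y x : ZFSet =>
      y ∈ Δ ∧ ∃ A : AC, m x = some A ∧ A ∈ L y))
    (f : ZFSet → ZFSet)
    (hbasic : ∀ x ∈ Δ, m x = none → f x = x)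
    (hmeta : ∀ x ∈ Δ, ∀ A : AC, m x = some A →
      ∀ z : ZFSet, z ∈ f x ↔ ∃ y ∈ Δ, A ∈ L y ∧ z = f y)
    -- basic elements are never sets produced by the construction
    (hsep : ∀ x ∈ Δ, ∀ y ∈ Δ, m x = none → (∃ A : AC, m y = some A) → f x ≠ f y)
    -- consequence of the meta-difference witness condition together with saturation
    (hdiff : ∀ x ∈ Δ, ∀ y ∈ Δ, x ≠ y → ∀ A B : AC, m x = some A → m y = some B →
      {z | z ∈ Δ ∧ A ∈ L z} ≠ {z | z ∈ Δ ∧ B ∈ L z}) :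
    Set.InjOn f Δ := by

  suffices h : ∀ x, x ∈ Δ → ∀ y ∈ Δ, f x = f y → x = y from
    fun x hx y hy hf => h x hx y hy hf
  intro x
  induction x using hwf.induction with
  | _ x IH =>
  intro hx y hy hfxy
  by_contra hne
  cases hmx : m x with
  | none =>
    cases hmy : m y with
    | none => exact hne ((hbasic x hx hmx).symm.trans (hfxy.trans (hbasic y hy hmy)))
    | some B => exact hsep x hx y hy hmx ⟨B, hmy⟩ hfxy
  | some A =>
    cases hmy : m y with
    | none => exact hsep y hy x hx hmy ⟨A, hmx⟩ hfxy.symm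
    | some B =>
      have hd := hdiff x hx y hy hne A B hmx hmy
      rw [Ne, Set.ext_iff] at hd
      push_neg at hd
      obtain ⟨z, hz⟩ := hd
      simp only [Set.mem_setOf_eq] at hz
      rcases hz with ⟨⟨hzΔ, hzA⟩, hzB⟩ | ⟨hzA, hzΔ, hzB⟩
      · have hmem : f z ∈ f x := (hmeta x hx A hmx (f z)).mpr ⟨z, hzΔ, hzA, rfl⟩
        rw [hfxy] at hmem
        obtain ⟨w, hwΔ, hwB, hfw⟩ := (hmeta y hy B hmy (f z)).mp hmem
        have hzw := IH z ⟨hzΔ, A, hmx, hzA⟩ hzΔ w hwΔ hfw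
        subst hzw
        exact hzB ⟨hzΔ, hwB⟩
      · have hmem : f z ∈ f y := (hmeta y hy B hmy (f z)).mpr ⟨z, hzΔ, hzB, rfl⟩
        rw [← hfxy] at hmem
        obtain ⟨w, hwΔ, hwA, hfw⟩ := (hmeta x hx A hmx (f z)).mp hmem
        have hwz := IH w ⟨hwΔ, A, hmx, hwA⟩ hwΔ z hzΔ hfw.symm
        subst hwz
        exact hzA ⟨hwΔ, hwA⟩
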